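/- Let f be a proper closed polyhedral convex function on ℝⁿ. Then for every K-minimal exposed face F* of epi f*, with Ψ(F*) := ⋂_{(u,f*(u)) ∈ F*} {(x,f(x)) : u ∈ ∂f(x)}, the dimensions are complementary: dim F* + dim Ψ(F*) = n. -/

import Mathlib

open Matrix Set
open scoped Pointwise

noncomputable section

/-- The epigraph of an extended-real-valued function on ℝⁿ. -/
def epi (n : ℕ) (f : (Fin n → ℝ) → EReal) : Set ((Fin n → ℝ) × ℝ) :=
  {p | f p.1 ≤ (p.2 : EReal)}

/-- The Legendre–Fenchel conjugate f*(u) = sup_x (⟨x,u⟩ − f(x)). -/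
def conj (n : ℕ) (f : (Fin n → ℝ) → EReal) (u : Fin n → ℝ) : EReal :=
  ⨆ x : Fin n → ℝ, (((x ⬝ᵥ u : ℝ) : EReal) - f x)

/-- The subdifferential ∂g(x₀) = {u : ∀x, g(x) ≥ g(x₀) + ⟨u, x − x₀⟩}. -/
def subdiff (n : ℕ) (g : (Fin n → ℝ) → EReal) (x₀ : Fin n → ℝ) : Set (Fin n → ℝ) :=
  {u | ∀ x : Fin n → ℝ, g x₀ + ((u ⬝ᵥ (x - x₀) : ℝ) : EReal) ≤ g x}

/-- The ordering cone K = {0}ⁿ × [0,∞) in ℝⁿ × ℝ. -/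
def Kcone (n : ℕ) : Set ((Fin n → ℝ) × ℝ) := {p | p.1 = 0 ∧ 0 ≤ p.2}

/-- y is K-minimal in A : ({y} − (K \ (−K))) ∩ A = ∅. -/
def KMinPt (n : ℕ) (A : Set ((Fin n → ℝ) × ℝ)) (y : (Fin n → ℝ) × ℝ) : Prop :=
  ({y} - (Kcone n \ (-Kcone n))) ∩ A = ∅

/-- The hyperplane H(u,s,α) = {(x,r) : ⟨x,u⟩ + r·s = α} in ℝⁿ × ℝ. -/
def Hyp (n : ℕ) (u : Fin n → ℝ) (s α : ℝ) : Set ((Fin n → ℝ) × ℝ) :=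
  {p | p.1 ⬝ᵥ u + p.2 * s = α}

/-- H(u,s,α) is a supporting hyperplane to A. -/
def IsSuppHyp (n : ℕ) (A : Set ((Fin n → ℝ) × ℝ)) (u : Fin n → ℝ) (s α : ℝ) : Prop :=
  (u, s) ≠ 0 ∧ (Hyp n u s α ∩ A).Nonempty ∧ ∀ p ∈ A, p.1 ⬝ᵥ u + p.2 * s ≤ α

/-- E is an exposed face of A: E = H ∩ A for some supporting hyperplane H of A. -/
def IsExpFace (n : ℕ) (A E : Set ((Fin n → ℝ) × ℝ)) : Prop :=
  ∃ (u : Fin n → ℝ) (s α : ℝ), IsSuppHyp n A u s α ∧ E = Hyp n u s α ∩ A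

/-- E is a K-minimal exposed face of A: an exposed face all of whose points are
K-minimal in A. -/
def IsKMinExpFace (n : ℕ) (A E : Set ((Fin n → ℝ) × ℝ)) : Prop :=
  IsExpFace n A E ∧ ∀ y ∈ E, KMinPt n A y

/-- The duality map Ψ(F*) := ⋂_{(u,f*(u)) ∈ F*} {(x,f(x)) : u ∈ ∂f(x)}. -/
def Psi (n : ℕ) (f : (Fin n → ℝ) → EReal) (Fs : Set ((Fin n → ℝ) × ℝ)) :
    Set ((Fin n → ℝ) × ℝ) :=
  ⋂ q ∈ {q ∈ Fs | (q.2 : EReal) = conj n f q.1},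
    {p | (p.2 : EReal) = f p.1 ∧ q.1 ∈ subdiff n f p.1}

/-- The inverse duality map Ψ*(F) := ⋂_{(x,f(x)) ∈ F} {(u,f*(u)) : u ∈ ∂f(x)}. -/
def PsiStar (n : ℕ) (f : (Fin n → ℝ) → EReal) (F : Set ((Fin n → ℝ) × ℝ)) :
    Set ((Fin n → ℝ) × ℝ) :=
  ⋂ p ∈ {p ∈ F | (p.2 : EReal) = f p.1},
    {q | (q.2 : EReal) = conj n f q.1 ∧ q.1 ∈ subdiff n f p.1}
/-- A is a polyhedral subset of ℝⁿ × ℝ (finite intersection of half-spaces). -/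
def IsPolyhedral (n : ℕ) (A : Set ((Fin n → ℝ) × ℝ)) : Prop :=
  ∃ (N : ℕ) (u : Fin N → Fin n → ℝ) (s β : Fin N → ℝ),
    A = {p | ∀ i, p.1 ⬝ᵥ u i + p.2 * s i ≤ β i}

/-- The dimension of a convex subset of ℝⁿ × ℝ: the dimension of its affine hull. -/
def dimSet (n : ℕ) (F : Set ((Fin n → ℝ) × ℝ)) : ℕ :=
  Module.finrank ℝ (affineSpan ℝ F).direction

namespace Stmt10Aux

def dotLin (n : ℕ) (u : Fin n → ℝ) : (Fin n → ℝ) →ₗ[ℝ] ℝ where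
  toFun x := x ⬝ᵥ u
  map_add' x y := add_dotProduct x y u
  map_smul' c x := by simp [smul_dotProduct]

def grMap (n : ℕ) (u : Fin n → ℝ) (c : ℝ) : (Fin n → ℝ) →ᵃ[ℝ] ((Fin n → ℝ) × ℝ) where
  toFun x := (x, x ⬝ᵥ u - c)
  linear := LinearMap.prod LinearMap.id (dotLin n u)
  map_vadd' p v := by
    ext
    · simp [vadd_eq_add]
    · simp [dotLin, vadd_eq_add, add_dotProduct]; ring

@[simp] lemma grMap_apply (n : ℕ) (u : Fin n → ℝ) (c : ℝ) (x : Fin n → ℝ) :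
    grMap n u c x = (x, x ⬝ᵥ u - c) := rfl

lemma grMap_linear_inj (n : ℕ) (u : Fin n → ℝ) (c : ℝ) :
    Function.Injective (grMap n u c).linear := by
  intro a b h
  have := congrArg Prod.fst h
  simpa [grMap, LinearMap.prod] using this

lemma finrank_vectorSpan_image (n : ℕ) (u : Fin n → ℝ) (c : ℝ) (S : Set (Fin n → ℝ)) :
    Module.finrank ℝ (vectorSpan ℝ (grMap n u c '' S)) = Module.finrank ℝ (vectorSpan ℝ S) := by
  rw [← direction_affineSpan, ← AffineSubspace.map_span, AffineSubspace.map_direction,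
    direction_affineSpan]
  exact ((Submodule.equivMapOfInjective _ (grMap_linear_inj n u c) _).symm.finrank_eq)

lemma dimSet_image (n : ℕ) (u : Fin n → ℝ) (c : ℝ) (S : Set (Fin n → ℝ)) :
    dimSet n (grMap n u c '' S) = Module.finrank ℝ (vectorSpan ℝ S) := by
  rw [dimSet, direction_affineSpan]
  exact finrank_vectorSpan_image n u c S

lemma inner_T (n : ℕ) (x y : Fin n → ℝ) :
    (inner ℝ ((WithLp.linearEquiv 2 ℝ (Fin n → ℝ)).symm x)
      ((WithLp.linearEquiv 2 ℝ (Fin n → ℝ)).symm y) : ℝ) = x ⬝ᵥ y := by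
  simp [PiLp.inner_apply, dotProduct, WithLp.linearEquiv, mul_comm]

lemma dim_compl (n : ℕ) (D E : Set (Fin n → ℝ))
    (h1 : ∀ v₁ ∈ D, ∀ v₂ ∈ D, ∀ x₁ ∈ E, ∀ x₂ ∈ E, (v₁ - v₂) ⬝ᵥ (x₁ - x₂) = 0)
    (h2 : ∀ w : Fin n → ℝ, (∀ v₁ ∈ D, ∀ v₂ ∈ D, (v₁ - v₂) ⬝ᵥ w = 0) → w ∈ vectorSpan ℝ E) :
    Module.finrank ℝ (vectorSpan ℝ D) + Module.finrank ℝ (vectorSpan ℝ E) = n := by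
  classical
  set T : (Fin n → ℝ) ≃ₗ[ℝ] EuclideanSpace ℝ (Fin n) :=
    (WithLp.linearEquiv 2 ℝ (Fin n → ℝ)).symm with hT
  set U : Submodule ℝ (EuclideanSpace ℝ (Fin n)) :=
    (vectorSpan ℝ D).map (T : (Fin n → ℝ) →ₗ[ℝ] EuclideanSpace ℝ (Fin n)) with hU
  set V : Submodule ℝ (EuclideanSpace ℝ (Fin n)) :=
    (vectorSpan ℝ E).map (T : (Fin n → ℝ) →ₗ[ℝ] EuclideanSpace ℝ (Fin n)) with hV
  have hUspan : U = Submodule.span ℝ (⇑T '' (D -ᵥ D)) := by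
    rw [hU, vectorSpan_def, Submodule.map_span]; rfl
  have hVspan : V = Submodule.span ℝ (⇑T '' (E -ᵥ E)) := by
    rw [hV, vectorSpan_def, Submodule.map_span]; rfl
  have hVU : V = Uᗮ := by
    apply le_antisymm
    · rw [hVspan]
      rw [Submodule.span_le]
      rintro _ ⟨e, he, rfl⟩
      obtain ⟨x₁, hx₁, x₂, hx₂, rfl⟩ := he
      rw [SetLike.mem_coe, Submodule.mem_orthogonal]
      intro y hy
      rw [hUspan] at hy
      induction hy using Submodule.span_induction with
      | mem z hz =>
        obtain ⟨d, hd, rfl⟩ := hz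
        obtain ⟨v₁, hv₁, v₂, hv₂, rfl⟩ := hd
        rw [inner_T]
        exact h1 v₁ hv₁ v₂ hv₂ x₁ hx₁ x₂ hx₂
      | zero => simp
      | add a b _ _ ha hb => rw [inner_add_left, ha, hb]; ring
      | smul c a _ ha => rw [inner_smul_left, ha]; simp
    · intro w' hw'
      set w : Fin n → ℝ := T.symm w' with hw
      have hww : T w = w' := by rw [hw]; exact T.apply_symm_apply w'
      have hwD : ∀ v₁ ∈ D, ∀ v₂ ∈ D, (v₁ - v₂) ⬝ᵥ w = 0 := by
        intro v₁ hv₁ v₂ hv₂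
        have hmem : T (v₁ - v₂) ∈ U :=
          Submodule.mem_map_of_mem (by simpa using vsub_mem_vectorSpan ℝ hv₁ hv₂)
        have := (Submodule.mem_orthogonal _ _).mp hw' _ hmem
        rw [← hww, inner_T] at this
        exact this
      have := h2 w hwD
      rw [hV, ← hww]
      exact Submodule.mem_map_of_mem this
  have hfr : Module.finrank ℝ U + Module.finrank ℝ Uᗮ = n := by
    rw [Submodule.finrank_add_finrank_orthogonal, finrank_euclideanSpace_fin]
  rw [← T.finrank_map_eq (vectorSpan ℝ D), ← T.finrank_map_eq (vectorSpan ℝ E)]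
  rw [← hU, ← hV, hVU]
  exact hfr

lemma div_eq_aux {σ A r : ℝ} (hσ : 0 < σ) : σ⁻¹ * A - r = (A - r * σ) / σ := by
  field_simp

lemma div_lem1 {σ A B r : ℝ} (hσ : 0 < σ) (h : A - r * σ ≤ B) : σ⁻¹ * A - r ≤ B / σ := by
  rw [div_eq_aux hσ]
  exact (div_le_div_iff_of_pos_right hσ).mpr h

lemma div_lem2 {σ A B r : ℝ} (hσ : 0 < σ) (h : B < A - r * σ) : B / σ < σ⁻¹ * A - r := by
  rw [div_eq_aux hσ]
  exact (div_lt_div_iff_of_pos_right hσ).mpr h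

lemma div_lem3 {σ A B r : ℝ} (hσ : 0 < σ) (h : A - r * σ = B) : σ⁻¹ * A - r = B / σ := by
  rw [div_eq_aux hσ, h]

lemma ereal_real_cases (x : EReal) (hb : x ≠ ⊥) : x = ⊤ ∨ ∃ r : ℝ, x = ↑r := by
  rcases eq_or_ne x ⊤ with h | h
  · exact Or.inl h
  · exact Or.inr ⟨x.toReal, (EReal.coe_toReal h hb).symm⟩

lemma ereal_le_coe_real (x : EReal) (hb : x ≠ ⊥) {c : ℝ} (h : x ≤ ↑c) :
    ∃ r : ℝ, x = ↑r ∧ r ≤ c := by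
  rcases ereal_real_cases x hb with h' | ⟨r, hr⟩
  · rw [h'] at h; exact absurd h (by simp)
  · exact ⟨r, hr, by rw [hr] at h; exact_mod_cast h⟩

end Stmt10Aux

open Stmt10Aux

/-- for a proper closed polyhedral convex f and every K-minimal
exposed face F* of epi f*, dim F* + dim Ψ(F*) = n. -/
theorem stmt10 (n : ℕ) (f : (Fin n → ℝ) → EReal)
    (hdom : ∃ x, f x ≠ ⊤) (hbot : ∀ x, f x ≠ ⊥)
    (hpoly : IsPolyhedral n (epi n f))
    (Fs : Set ((Fin n → ℝ) × ℝ))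
    (hFs : IsKMinExpFace n (epi n (conj n f)) Fs) :
    dimSet n Fs + dimSet n (Psi n f Fs) = n := by
  classical
  obtain ⟨hexp, hmin⟩ := hFs
  obtain ⟨uu, s, α, ⟨hns, hne, hsupp⟩, hFsEq⟩ := hexp
  obtain ⟨p₀, hp₀⟩ := hne
  obtain ⟨x₀, hx₀⟩ := hdom
  obtain ⟨N, a, t, b, hrep⟩ := hpoly
  set r₀ : ℝ := (f x₀).toReal with hr₀
  have hx₀r : f x₀ = ((r₀ : ℝ) : EReal) := (EReal.coe_toReal hx₀ (hbot x₀)).symm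
  -- Fenchel-Young inequality
  have hFY : ∀ v y : Fin n → ℝ, ((y ⬝ᵥ v : ℝ) : EReal) - f y ≤ conj n f v :=
    fun v y => le_iSup (fun x => ((x ⬝ᵥ v : ℝ) : EReal) - f x) y
  -- conj is never ⊥
  have hconj_nebot : ∀ v, conj n f v ≠ ⊥ := by
    intro v heq
    have h := hFY v x₀
    rw [heq, hx₀r, ← EReal.coe_sub, le_bot_iff] at h
    exact (EReal.coe_ne_bot _) h
  -- membership in epi f via constraints
  have hepiIff : ∀ (x : Fin n → ℝ) (r : ℝ),
      f x ≤ (r : EReal) ↔ ∀ i, x ⬝ᵥ a i + r * t i ≤ b i := by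
    intro x r
    have : (x, r) ∈ epi n f ↔ (x, r) ∈ {p : (Fin n → ℝ) × ℝ | ∀ i, p.1 ⬝ᵥ a i + p.2 * t i ≤ b i} := by
      rw [hrep]
    simpa [epi] using this
  -- all t i ≤ 0
  have htle : ∀ i, t i ≤ 0 := by
    intro i
    by_contra hpos
    push_neg at hpos
    have hmem : ∀ r : ℝ, r₀ ≤ r → x₀ ⬝ᵥ a i + r * t i ≤ b i := by
      intro r hr
      have hm : f x₀ ≤ (r : EReal) := by rw [hx₀r]; exact_mod_cast hr
      exact (hepiIff x₀ r).mp hm i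
    set r := max r₀ ((b i - x₀ ⬝ᵥ a i) / t i + 1) with hrdef
    have h1 := hmem r (le_max_left _ _)
    have h2 : (b i - x₀ ⬝ᵥ a i) / t i + 1 ≤ r := le_max_right _ _
    have h3 : ((b i - x₀ ⬝ᵥ a i) / t i) * t i = b i - x₀ ⬝ᵥ a i :=
      div_mul_cancel₀ _ (ne_of_gt hpos)
    nlinarith [mul_le_mul_of_nonneg_right h2 (le_of_lt hpos)]
  -- s < 0
  have hsle : s ≤ 0 := by
    by_contra hpos
    push_neg at hpos
    have hA : ∀ r : ℝ, p₀.2 ≤ r → p₀.1 ⬝ᵥ uu + r * s ≤ α := by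
      intro r hr
      have h2 := hp₀.2
      simp only [epi, mem_setOf_eq] at h2
      exact hsupp (p₀.1, r) (le_trans h2 (by exact_mod_cast hr))
    set r := max p₀.2 ((α - p₀.1 ⬝ᵥ uu) / s + 1) with hrdef
    have h1 := hA r (le_max_left _ _)
    have h2 : (α - p₀.1 ⬝ᵥ uu) / s + 1 ≤ r := le_max_right _ _
    have h3 : ((α - p₀.1 ⬝ᵥ uu) / s) * s = α - p₀.1 ⬝ᵥ uu :=
      div_mul_cancel₀ _ (ne_of_gt hpos)
    nlinarith [mul_le_mul_of_nonneg_right h2 (le_of_lt hpos)]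
  have hsne : s ≠ 0 := by
    intro h0
    have hp' : (p₀.1, p₀.2 + 1) ∈ Fs := by
      rw [hFsEq]
      refine ⟨?_, ?_⟩
      · have h1 := hp₀.1
        simp only [Hyp, mem_setOf_eq, h0, mul_zero] at h1 ⊢
        exact h1
      · have h2 := hp₀.2
        simp only [epi, mem_setOf_eq] at h2 ⊢
        exact le_trans h2 (by exact_mod_cast (by linarith : p₀.2 ≤ p₀.2 + 1))
    have hk := hmin _ hp'
    rw [KMinPt] at hk
    have hcontra : p₀ ∈ ({(p₀.1, p₀.2 + 1)} - (Kcone n \ -Kcone n)) ∩ epi n (conj n f) := by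
      refine ⟨?_, hp₀.2⟩
      rw [Set.mem_sub]
      refine ⟨(p₀.1, p₀.2 + 1), rfl, ((0 : Fin n → ℝ), (1 : ℝ)), ⟨⟨rfl, zero_le_one⟩, ?_⟩, ?_⟩
      · intro hmem
        rw [Set.mem_neg] at hmem
        have h3 := hmem.2
        norm_num [Prod.snd_neg] at h3
      · simp [Prod.ext_iff]
    rw [hk] at hcontra
    exact hcontra
  have hs : (0 : ℝ) < -s := neg_pos.mpr (lt_of_le_of_ne hsle hsne)
  set u₀ : Fin n → ℝ := (-s)⁻¹ • uu with hu₀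
  set α₀ : ℝ := α / (-s) with hα₀
  -- hyperplane characterization
  have hHyp : ∀ p : (Fin n → ℝ) × ℝ, p ∈ Hyp n uu s α ↔ p.2 = p.1 ⬝ᵥ u₀ - α₀ := by
    intro p
    have hdot : p.1 ⬝ᵥ u₀ = (-s)⁻¹ * (p.1 ⬝ᵥ uu) := by
      rw [hu₀, dotProduct_smul, smul_eq_mul]
    rw [Hyp, mem_setOf_eq, hdot, hα₀]
    constructor
    · intro h
      have h2 := div_lem3 hs (by nlinarith : p.1 ⬝ᵥ uu - p.2 * (-s) = α)
      linarith
    · intro h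
      have hc : (-s)⁻¹ * (p.1 ⬝ᵥ uu) - p.2 = α / (-s) := by linarith
      have hne : -s ≠ 0 := ne_of_gt hs
      field_simp at hc
      nlinarith [hc]
  -- scaled support inequality
  have hsupp' : ∀ (v : Fin n → ℝ) (c : ℝ), conj n f v = (c : EReal) → v ⬝ᵥ u₀ - c ≤ α₀ := by
    intro v c hc
    have hmem : (v, c) ∈ epi n (conj n f) := by
      simp only [epi, mem_setOf_eq, hc]; exact le_refl _
    have h := hsupp _ hmem
    have hdot : v ⬝ᵥ u₀ = (-s)⁻¹ * (v ⬝ᵥ uu) := by rw [hu₀, dotProduct_smul, smul_eq_mul]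
    rw [hdot, hα₀]
    exact div_lem1 hs (by nlinarith : v ⬝ᵥ uu - c * (-s) ≤ α)
  set D : Set (Fin n → ℝ) := {v | conj n f v = ((v ⬝ᵥ u₀ - α₀ : ℝ) : EReal)} with hD
  have hFsD : Fs = grMap n u₀ α₀ '' D := by
    rw [hFsEq]
    ext p
    constructor
    · rintro ⟨hH, hA⟩
      have hp2 : p.2 = p.1 ⬝ᵥ u₀ - α₀ := (hHyp p).1 hH
      have hAle : conj n f p.1 ≤ (p.2 : EReal) := hA
      obtain ⟨c, hc, hcle⟩ := ereal_le_coe_real _ (hconj_nebot p.1) hAle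
      have h1 : p.1 ⬝ᵥ u₀ - c ≤ α₀ := hsupp' _ _ hc
      have hceq : c = p.2 := by linarith
      refine ⟨p.1, ?_, ?_⟩
      · show conj n f p.1 = _
        rw [hc, hceq, hp2]
      · rw [grMap_apply]
        exact Prod.ext rfl hp2.symm
    · rintro ⟨v, hv, rfl⟩
      have hvc : conj n f v = ((v ⬝ᵥ u₀ - α₀ : ℝ) : EReal) := hv
      rw [grMap_apply]
      refine ⟨(hHyp _).2 rfl, ?_⟩
      show conj n f v ≤ _
      exact le_of_eq hvc
  have hp₀' : p₀ ∈ grMap n u₀ α₀ '' D := by rw [← hFsD, hFsEq]; exact hp₀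
  obtain ⟨v₀, hv₀D, -⟩ := hp₀'
  set c₀ : ℝ := v₀ ⬝ᵥ u₀ - α₀ with hc₀
  have hv₀ : conj n f v₀ = ((c₀ : ℝ) : EReal) := hv₀D
  -- affine minorants from rows with t i < 0
  have hminor : ∀ i, t i < 0 → ∀ y : Fin n → ℝ,
      ((y ⬝ᵥ ((-(t i))⁻¹ • a i) : ℝ) : EReal) - f y ≤ ((b i / (-(t i)) : ℝ) : EReal) := by
    intro i hti y
    have hσ : (0:ℝ) < -(t i) := neg_pos.mpr hti
    rcases ereal_real_cases (f y) (hbot y) with htop | ⟨ry, hry⟩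
    · rw [htop, EReal.sub_top]; exact bot_le
    · rw [hry, ← EReal.coe_sub, EReal.coe_le_coe_iff]
      have hcon : y ⬝ᵥ a i + ry * t i ≤ b i := (hepiIff y ry).mp (le_of_eq hry) i
      have hdot : y ⬝ᵥ ((-(t i))⁻¹ • a i) = (-(t i))⁻¹ * (y ⬝ᵥ a i) := by
        rw [dotProduct_smul, smul_eq_mul]
      rw [hdot]
      exact div_lem1 hσ (by nlinarith : y ⬝ᵥ a i - ry * (-(t i)) ≤ b i)
  -- domain constraints from rows with t i = 0
  have hdomc : ∀ i, t i = 0 → ∀ (y : Fin n → ℝ) (ry : ℝ), f y = (ry : EReal) → y ⬝ᵥ a i ≤ b i := by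
    intro i hti y ry hry
    have h := (hepiIff y ry).mp (le_of_eq hry) i
    rw [hti, mul_zero, add_zero] at h
    exact h
  -- upper bound for conj (v₀ + a i) when t i = 0
  have hub0 : ∀ i, t i = 0 → conj n f (v₀ + a i) ≤ ((c₀ + b i : ℝ) : EReal) := by
    intro i hti
    apply iSup_le
    intro y
    rcases ereal_real_cases (f y) (hbot y) with htop | ⟨ry, hry⟩
    · rw [htop, EReal.sub_top]; exact bot_le
    · have h1 : y ⬝ᵥ v₀ - ry ≤ c₀ := by
        have h := hFY v₀ y
        rw [hry, hv₀, ← EReal.coe_sub, EReal.coe_le_coe_iff] at h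
        exact h
      have h2 : y ⬝ᵥ a i ≤ b i := hdomc i hti y ry hry
      rw [hry, ← EReal.coe_sub, EReal.coe_le_coe_iff, dotProduct_add]
      linarith
  -- strong duality
  have hstrong : f u₀ = ((α₀ : ℝ) : EReal) := by
    have hle : f u₀ ≤ ((α₀ : ℝ) : EReal) := by
      by_contra hlt
      have hnotmem : ¬ ∀ i, u₀ ⬝ᵥ a i + α₀ * t i ≤ b i := fun h => hlt ((hepiIff u₀ α₀).mpr h)
      push_neg at hnotmem
      obtain ⟨i, hi⟩ := hnotmem
      rcases lt_or_eq_of_le (htle i) with hti | hti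
      · have hσ : (0:ℝ) < -(t i) := neg_pos.mpr hti
        set v : Fin n → ℝ := (-(t i))⁻¹ • a i with hv
        have hcb : conj n f v ≤ ((b i / (-(t i)) : ℝ) : EReal) := iSup_le (hminor i hti)
        obtain ⟨cv, hcv, hcvle⟩ := ereal_le_coe_real _ (hconj_nebot v) hcb
        have hle1 : v ⬝ᵥ u₀ - cv ≤ α₀ := hsupp' v cv hcv
        have hdot : v ⬝ᵥ u₀ = (-(t i))⁻¹ * (a i ⬝ᵥ u₀) := by
          rw [hv, smul_dotProduct, smul_eq_mul]
        have hcomm : a i ⬝ᵥ u₀ = u₀ ⬝ᵥ a i := dotProduct_comm _ _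
        have hviol : b i / (-(t i)) < (-(t i))⁻¹ * (a i ⬝ᵥ u₀) - α₀ := by
          apply div_lem2 hσ
          nlinarith
        rw [hdot] at hle1
        linarith
      · have hti' : t i = 0 := hti
        rw [hti', mul_zero, add_zero] at hi
        obtain ⟨c₁, hc₁, hc₁le⟩ := ereal_le_coe_real _ (hconj_nebot (v₀ + a i)) (hub0 i hti')
        have hle1 : (v₀ + a i) ⬝ᵥ u₀ - c₁ ≤ α₀ := hsupp' _ _ hc₁
        rw [add_dotProduct] at hle1
        have hcomm : a i ⬝ᵥ u₀ = u₀ ⬝ᵥ a i := dotProduct_comm _ _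
        rw [hc₀] at hc₁le
        linarith
    obtain ⟨ru, hru, hrule⟩ := ereal_le_coe_real _ (hbot u₀) hle
    have hlow := hFY v₀ u₀
    rw [hru, hv₀, ← EReal.coe_sub, EReal.coe_le_coe_iff] at hlow
    have hcomm : u₀ ⬝ᵥ v₀ = v₀ ⬝ᵥ u₀ := dotProduct_comm _ _
    rw [hc₀] at hlow
    have : ru = α₀ := by linarith
    rw [hru, this]
  -- the set E
  set E : Set (Fin n → ℝ) := {x | ∀ v ∈ D, v ∈ subdiff n f x} with hE
  have hsubD : ∀ v ∈ D, ∀ x : Fin n → ℝ,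
      f x ≤ ((x ⬝ᵥ v - (v ⬝ᵥ u₀ - α₀) : ℝ) : EReal) → v ∈ subdiff n f x := by
    intro v hv x hfx
    intro y
    have hvc : conj n f v = ((v ⬝ᵥ u₀ - α₀ : ℝ) : EReal) := hv
    have hfy := hFY v y
    rcases ereal_real_cases (f y) (hbot y) with htop | ⟨ry, hry⟩
    · rw [htop]; exact le_top
    · rw [hry]
      rw [hvc, hry, ← EReal.coe_sub, EReal.coe_le_coe_iff] at hfy
      calc f x + ((v ⬝ᵥ (y - x) : ℝ) : EReal)
          ≤ ((x ⬝ᵥ v - (v ⬝ᵥ u₀ - α₀) : ℝ) : EReal) + ((v ⬝ᵥ (y - x) : ℝ) : EReal) :=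
            add_le_add_left hfx _
        _ ≤ ((ry : ℝ) : EReal) := by
            rw [← EReal.coe_add, EReal.coe_le_coe_iff, dotProduct_sub]
            have hc1 : y ⬝ᵥ v = v ⬝ᵥ y := dotProduct_comm _ _
            have hc2 : x ⬝ᵥ v = v ⬝ᵥ x := dotProduct_comm _ _
            linarith
  have hu₀E : u₀ ∈ E := by
    intro v hv
    apply hsubD v hv
    rw [hstrong, EReal.coe_le_coe_iff]
    have hcomm : u₀ ⬝ᵥ v = v ⬝ᵥ u₀ := dotProduct_comm _ _
    linarith
  have hkey : ∀ v ∈ D, ∀ x ∈ E, f x = ((x ⬝ᵥ v - (v ⬝ᵥ u₀ - α₀) : ℝ) : EReal) := by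
    intro v hv x hx
    have hvc : conj n f v = ((v ⬝ᵥ u₀ - α₀ : ℝ) : EReal) := hv
    have h5 := hx v hv u₀
    rw [hstrong] at h5
    have hxt : f x ≠ ⊤ := by
      intro htop
      rw [htop, EReal.top_add_coe] at h5
      exact absurd h5 (by simp)
    obtain ⟨rx, hrx⟩ : ∃ rx : ℝ, f x = (rx : EReal) := by
      rcases ereal_real_cases (f x) (hbot x) with h | h
      · exact absurd h hxt
      · exact h
    rw [hrx, ← EReal.coe_add, EReal.coe_le_coe_iff, dotProduct_sub] at h5
    have h6 := hFY v x
    rw [hrx, hvc, ← EReal.coe_sub, EReal.coe_le_coe_iff] at h6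
    have hc1 : x ⬝ᵥ v = v ⬝ᵥ x := dotProduct_comm _ _
    rw [hrx]
    exact congrArg _ (by linarith)
  have hPsiE : Psi n f Fs = grMap n v₀ c₀ '' E := by
    have hidx : {q ∈ Fs | (q.2 : EReal) = conj n f q.1} = Fs := by
      apply Set.Subset.antisymm
      · exact fun q hq => hq.1
      · intro q hq
        refine ⟨hq, ?_⟩
        rw [hFsD] at hq
        obtain ⟨v, hv, rfl⟩ := hq
        have hvc : conj n f v = ((v ⬝ᵥ u₀ - α₀ : ℝ) : EReal) := hv
        rw [grMap_apply]
        exact hvc.symm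
    unfold Psi
    rw [hidx]
    ext p
    simp only [Set.mem_iInter, mem_setOf_eq]
    constructor
    · intro hp
      have hq₀ : grMap n u₀ α₀ v₀ ∈ Fs := by rw [hFsD]; exact mem_image_of_mem _ hv₀D
      have hp₀'' := hp _ hq₀
      have hxE : p.1 ∈ E := by
        intro v hv
        have hqv : grMap n u₀ α₀ v ∈ Fs := by rw [hFsD]; exact mem_image_of_mem _ hv
        exact (hp _ hqv).2
      refine ⟨p.1, hxE, ?_⟩
      rw [grMap_apply]
      have hfp : (p.2 : EReal) = f p.1 := hp₀''.1
      rw [hkey v₀ hv₀D p.1 hxE, ← hc₀] at hfp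
      have hfp2 : p.2 = p.1 ⬝ᵥ v₀ - c₀ := by exact_mod_cast hfp
      exact Prod.ext rfl hfp2.symm
    · rintro ⟨x, hxE, rfl⟩ q hq
      rw [hFsD] at hq
      obtain ⟨v, hv, rfl⟩ := hq
      constructor
      · show ((x ⬝ᵥ v₀ - c₀ : ℝ) : EReal) = f x
        rw [hkey v₀ hv₀D x hxE, ← hc₀]
      · exact hxE v hv
  have h1 : ∀ v₁ ∈ D, ∀ v₂ ∈ D, ∀ x₁ ∈ E, ∀ x₂ ∈ E, (v₁ - v₂) ⬝ᵥ (x₁ - x₂) = 0 := by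
    intro v₁ hv₁ v₂ hv₂ x₁ hx₁ x₂ hx₂
    have g1 : x₁ ⬝ᵥ v₁ - (v₁ ⬝ᵥ u₀ - α₀) = x₁ ⬝ᵥ v₂ - (v₂ ⬝ᵥ u₀ - α₀) := by
      have h := (hkey v₁ hv₁ x₁ hx₁).symm.trans (hkey v₂ hv₂ x₁ hx₁)
      exact_mod_cast h
    have g2 : x₂ ⬝ᵥ v₁ - (v₁ ⬝ᵥ u₀ - α₀) = x₂ ⬝ᵥ v₂ - (v₂ ⬝ᵥ u₀ - α₀) := by
      have h := (hkey v₁ hv₁ x₂ hx₂).symm.trans (hkey v₂ hv₂ x₂ hx₂)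
      exact_mod_cast h
    have expand : (v₁ - v₂) ⬝ᵥ (x₁ - x₂)
        = x₁ ⬝ᵥ v₁ - x₁ ⬝ᵥ v₂ - x₂ ⬝ᵥ v₁ + x₂ ⬝ᵥ v₂ := by
      rw [sub_dotProduct, dotProduct_sub, dotProduct_sub]
      have c11 : v₁ ⬝ᵥ x₁ = x₁ ⬝ᵥ v₁ := dotProduct_comm _ _
      have c12 : v₁ ⬝ᵥ x₂ = x₂ ⬝ᵥ v₁ := dotProduct_comm _ _
      have c21 : v₂ ⬝ᵥ x₁ = x₁ ⬝ᵥ v₂ := dotProduct_comm _ _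
      have c22 : v₂ ⬝ᵥ x₂ = x₂ ⬝ᵥ v₂ := dotProduct_comm _ _
      rw [c11, c12, c21, c22]
      ring
    rw [expand]
    linarith
  have h2 : ∀ w : Fin n → ℝ, (∀ v₁ ∈ D, ∀ v₂ ∈ D, (v₁ - v₂) ⬝ᵥ w = 0) → w ∈ vectorSpan ℝ E := by
    intro w hw
    set m : ℝ := v₀ ⬝ᵥ w with hm
    have hvw : ∀ v ∈ D, v ⬝ᵥ w = m := by
      intro v hv
      have h := hw v hv v₀ hv₀D
      rw [sub_dotProduct] at h
      linarith
    have hDact : ∀ i, u₀ ⬝ᵥ a i + α₀ * t i = b i → w ⬝ᵥ a i + m * t i = 0 := by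
      intro i hact
      rcases lt_or_eq_of_le (htle i) with hti | hti
      · have hσ : (0:ℝ) < -(t i) := neg_pos.mpr hti
        have hneσ : -(t i) ≠ 0 := ne_of_gt hσ
        set v : Fin n → ℝ := (-(t i))⁻¹ • a i with hv
        have hvD : v ∈ D := by
          show conj n f v = _
          have hup : conj n f v ≤ ((b i / (-(t i)) : ℝ) : EReal) := iSup_le (hminor i hti)
          have hlo := hFY v u₀
          rw [hstrong, ← EReal.coe_sub] at hlo
          have hdot : v ⬝ᵥ u₀ = (-(t i))⁻¹ * (a i ⬝ᵥ u₀) := by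
            rw [hv, smul_dotProduct, smul_eq_mul]
          have hbb : v ⬝ᵥ u₀ - α₀ = b i / (-(t i)) := by
            rw [hdot]
            apply div_lem3 hσ
            have hcm := dotProduct_comm (a i) u₀
            nlinarith
          rw [hbb]
          apply le_antisymm hup
          have hcomm : u₀ ⬝ᵥ v = v ⬝ᵥ u₀ := dotProduct_comm _ _
          rw [hcomm, hbb] at hlo
          exact hlo
        have hvwm := hvw v hvD
        rw [hv, smul_dotProduct, smul_eq_mul] at hvwm
        have haw : a i ⬝ᵥ w = -(t i) * m := by
          have h := congrArg (fun z => -(t i) * z) hvwm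
          rw [← mul_assoc, mul_inv_cancel₀ hneσ, one_mul] at h
          exact h
        have hcomm : a i ⬝ᵥ w = w ⬝ᵥ a i := dotProduct_comm _ _
        nlinarith
      · have hti' : t i = 0 := hti
        rw [hti', mul_zero, add_zero] at hact
        have hvD : v₀ + a i ∈ D := by
          show conj n f (v₀ + a i) = _
          have hup := hub0 i hti'
          have hlo := hFY (v₀ + a i) u₀
          rw [hstrong, ← EReal.coe_sub] at hlo
          have heq2 : (v₀ + a i) ⬝ᵥ u₀ - α₀ = c₀ + b i := by
            rw [add_dotProduct, hc₀]
            have hcm := dotProduct_comm (a i) u₀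
            linarith
          rw [heq2]
          apply le_antisymm hup
          have hcomm : u₀ ⬝ᵥ (v₀ + a i) = (v₀ + a i) ⬝ᵥ u₀ := dotProduct_comm _ _
          rw [hcomm, heq2] at hlo
          exact hlo
        have hvwm := hvw _ hvD
        rw [add_dotProduct] at hvwm
        have hcomm : a i ⬝ᵥ w = w ⬝ᵥ a i := dotProduct_comm _ _
        rw [hti', mul_zero, add_zero]
        linarith
    have hQ : ∀ᶠ ε in nhdsWithin (0:ℝ) (Set.Ioi 0),
        f (u₀ + ε • w) ≤ ((α₀ + ε * m : ℝ) : EReal) := by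
      have hall : ∀ᶠ ε in nhdsWithin (0:ℝ) (Set.Ioi 0),
          ∀ i, (u₀ + ε • w) ⬝ᵥ a i + (α₀ + ε * m) * t i ≤ b i := by
        rw [Filter.eventually_all]
        intro i
        have hbase : u₀ ⬝ᵥ a i + α₀ * t i ≤ b i := (hepiIff u₀ α₀).mp (le_of_eq hstrong) i
        have hexpand : ∀ ε : ℝ, (u₀ + ε • w) ⬝ᵥ a i + (α₀ + ε * m) * t i
            = (u₀ ⬝ᵥ a i + α₀ * t i) + ε * (w ⬝ᵥ a i + m * t i) := by
          intro ε
          simp only [add_dotProduct, smul_dotProduct, smul_eq_mul]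
          ring
        rcases eq_or_lt_of_le hbase with heq | hlt
        · apply Filter.Eventually.of_forall
          intro ε
          rw [hexpand, hDact i heq]
          simpa using le_of_eq heq
        · have hcont : Continuous fun ε : ℝ =>
              (u₀ ⬝ᵥ a i + α₀ * t i) + ε * (w ⬝ᵥ a i + m * t i) := by fun_prop
          have htend : Filter.Tendsto
              (fun ε : ℝ => (u₀ ⬝ᵥ a i + α₀ * t i) + ε * (w ⬝ᵥ a i + m * t i))
              (nhdsWithin (0:ℝ) (Set.Ioi 0)) (nhds (u₀ ⬝ᵥ a i + α₀ * t i)) := by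
            have h0 := (hcont.tendsto 0).mono_left
              (nhdsWithin_le_nhds : nhdsWithin (0:ℝ) (Set.Ioi 0) ≤ nhds 0)
            simpa using h0
          filter_upwards [htend.eventually_lt_const hlt] with ε hε
          rw [hexpand]
          exact le_of_lt hε
      filter_upwards [hall] with ε hε
      exact (hepiIff _ _).mpr hε
    obtain ⟨ε, hQε, hεpos⟩ := (hQ.and eventually_mem_nhdsWithin).exists
    rw [Set.mem_Ioi] at hεpos
    set x' : Fin n → ℝ := u₀ + ε • w with hx'
    have hx'E : x' ∈ E := by
      intro v hv
      apply hsubD v hv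
      refine le_trans hQε ?_
      rw [EReal.coe_le_coe_iff]
      have hdot : x' ⬝ᵥ v = u₀ ⬝ᵥ v + ε * (w ⬝ᵥ v) := by
        rw [hx']
        simp only [add_dotProduct, smul_dotProduct, smul_eq_mul]
      have hwv : w ⬝ᵥ v = m := by rw [dotProduct_comm]; exact hvw v hv
      have hcomm : u₀ ⬝ᵥ v = v ⬝ᵥ u₀ := dotProduct_comm _ _
      rw [hdot, hwv, hcomm]
      linarith
    have hvsub : x' - u₀ ∈ vectorSpan ℝ E := by
      have h := vsub_mem_vectorSpan ℝ hx'E hu₀E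
      simpa using h
    have hεw : x' - u₀ = ε • w := by rw [hx', add_sub_cancel_left]
    rw [hεw] at hvsub
    have hfin := Submodule.smul_mem (vectorSpan ℝ E) ε⁻¹ hvsub
    rw [smul_smul, inv_mul_cancel₀ (ne_of_gt hεpos), one_smul] at hfin
    exact hfin
  rw [hPsiE, hFsD, dimSet_image, dimSet_image]
  exact dim_compl n D E h1 h2
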